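/- For every complex number λ with λ² − 5λ + 2 = 0, every nonzero integer n, and every integer m with |m| ≥ 2, we have λ^n ≠ m (where λ^n denotes the integer power zpow, noting λ ≠ 0 since λ divides 2). -/

import Mathlib

private def rootSeq : ℕ → ℤ × ℤ
  | 0 => (0, 1)
  | k + 1 => ((rootSeq k).2 + 5 * (rootSeq k).1, -2 * (rootSeq k).1)

private lemma rootSeq_pos : ∀ k, 1 ≤ k → 0 < (rootSeq k).1 ∧ -2 * (rootSeq k).1 ≤ (rootSeq k).2
  | 0, h => by omega
  | 1, _ => by simp [rootSeq]
  | k + 2, _ => by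
    obtain ⟨ha, hb⟩ := rootSeq_pos (k + 1) (by omega)
    have h : rootSeq (k + 2) =
        ((rootSeq (k + 1)).2 + 5 * (rootSeq (k + 1)).1, -2 * (rootSeq (k + 1)).1) := rfl
    rw [h]
    constructor <;> simp <;> omega

private lemma pow_eq_lin (l : ℂ) (hl : l ^ 2 - 5 * l + 2 = 0) (k : ℕ) :
    l ^ k = ((rootSeq k).1 : ℂ) * l + ((rootSeq k).2 : ℂ) := by
  induction k with
  | zero => simp [rootSeq]
  | succ k ih =>
    have hsq : l ^ 2 = 5 * l - 2 := by linear_combination hl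
    have : l ^ (k + 1) = l ^ k * l := by ring
    rw [this, ih, rootSeq]
    push_cast
    linear_combination ((rootSeq k).1 : ℂ) * hsq

private lemma root_irrational (l : ℂ) (hl : l ^ 2 - 5 * l + 2 = 0) (q : ℚ) :
    l ≠ (q : ℂ) := by
  rintro rfl
  have hq : q ^ 2 - 5 * q + 2 = 0 := by exact_mod_cast hl
  have hq' : (q : ℝ) ^ 2 - 5 * q + 2 = 0 := by exact_mod_cast hq
  have h17 : ((2 * q - 5 : ℚ) : ℝ) ^ 2 = 17 := by
    push_cast
    linear_combination 4 * hq'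
  have hirr : Irrational (Real.sqrt 17) := (by norm_num : Nat.Prime 17).irrational_sqrt
  have : Real.sqrt 17 = |((2 * q - 5 : ℚ) : ℝ)| := by
    rw [← h17, Real.sqrt_sq_eq_abs]
  rw [this] at hirr
  exact hirr ⟨|2 * q - 5|, by push_cast; simp⟩

private lemma pow_ne_rat (l : ℂ) (hl : l ^ 2 - 5 * l + 2 = 0) (k : ℕ) (hk : 1 ≤ k) (q : ℚ) :
    l ^ k ≠ (q : ℂ) := by
  intro h
  obtain ⟨ha, _⟩ := rootSeq_pos k hk
  rw [pow_eq_lin l hl k] at h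
  have hane : ((rootSeq k).1 : ℂ) ≠ 0 := by exact_mod_cast ha.ne'
  have : l = (((q - (rootSeq k).2) / (rootSeq k).1 : ℚ) : ℂ) := by
    push_cast
    field_simp
    linear_combination h
  exact root_irrational l hl _ this

/-- For every complex root `l` of `x² - 5x + 2`, every nonzero integer `n` and
every integer `m` with `|m| ≥ 2`, we have `l ^ n ≠ m`. -/
theorem root_zpow_ne_int (l : ℂ) (hl : l ^ 2 - 5 * l + 2 = 0)
    (n : ℤ) (hn : n ≠ 0) (m : ℤ) (hm : 2 ≤ |m|) :
    l ^ n ≠ (m : ℂ) := by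
  have hl0 : l ≠ 0 := by
    rintro rfl
    norm_num at hl
  have hm0 : (m : ℚ) ≠ 0 := by
    have : m ≠ 0 := by rintro rfl; simp at hm
    exact_mod_cast this
  obtain ⟨k, rfl | rfl⟩ := n.eq_nat_or_neg
  · have hk : 1 ≤ k := by
      rcases Nat.eq_zero_or_pos k with h | h
      · subst h; simp at hn
      · exact h
    rw [zpow_natCast]
    have := pow_ne_rat l hl k hk (m : ℚ)
    simpa using this
  · have hk : 1 ≤ k := by
      rcases Nat.eq_zero_or_pos k with h | h
      · subst h; simp at hn
      · exact h
    intro h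
    rw [zpow_neg, zpow_natCast] at h
    have hc : (((m : ℚ)⁻¹ : ℚ) : ℂ) = ((m : ℂ))⁻¹ := by push_cast; ring
    apply pow_ne_rat l hl k hk (m : ℚ)⁻¹
    rw [hc, ← h, inv_inv]
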